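/- Every isotropic tensor function Φ from an isotropic subset M of Sym(n) to Sym(n) is coaxial: for each X ∈ M, every eigenvector of X is an eigenvector of Φ(X). -/

import Mathlib

open Matrix

def IsEigenvector {n : ℕ} (A : Matrix (Fin n) (Fin n) ℝ) (v : Fin n → ℝ) : Prop :=
  v ≠ 0 ∧ ∃ μ : ℝ, A.mulVec v = μ • v

/-- `A` is coaxial to `B`: every eigenvector of `A` is an eigenvector of `B`. -/
def Coaxial {n : ℕ} (A B : Matrix (Fin n) (Fin n) ℝ) : Prop :=
  ∀ v : Fin n → ℝ, IsEigenvector A v → IsEigenvector B v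

/-- A matrix is orthogonal. -/
def IsOrthogonal {n : ℕ} (Q : Matrix (Fin n) (Fin n) ℝ) : Prop :=
  Q * Qᵀ = 1 ∧ Qᵀ * Q = 1

/-- Every isotropic tensor function Φ : M → Sym(n) on an
isotropic set M ⊂ Sym(n) is coaxial: for each X ∈ M, every eigenvector of X
is an eigenvector of Φ(X). -/
theorem isotropic_implies_coaxial {n : ℕ}
    (M : Set (Matrix (Fin n) (Fin n) ℝ))
    (hMsym : ∀ X ∈ M, X.IsSymm)
    (hMiso : ∀ X ∈ M, ∀ Q : Matrix (Fin n) (Fin n) ℝ, IsOrthogonal Q →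
      Qᵀ * X * Q ∈ M)
    (Φ : Matrix (Fin n) (Fin n) ℝ → Matrix (Fin n) (Fin n) ℝ)
    (hΦsym : ∀ X ∈ M, (Φ X).IsSymm)
    (hΦiso : ∀ X ∈ M, ∀ Q : Matrix (Fin n) (Fin n) ℝ, IsOrthogonal Q →
      Φ (Qᵀ * X * Q) = Qᵀ * Φ X * Q) :
    ∀ X ∈ M, Coaxial X (Φ X) := by
  intro X hX v hv
  obtain ⟨hv0, μ, hμ⟩ := hv
  have hvv : v ⬝ᵥ v ≠ 0 := fun h => hv0 (dotProduct_self_eq_zero.mp h)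
  set c : ℝ := 2 / (v ⬝ᵥ v) with hc
  set P : Matrix (Fin n) (Fin n) ℝ := vecMulVec v v with hP
  set Q : Matrix (Fin n) (Fin n) ℝ := 1 - c • P with hQ
  have hμ' : ∀ i, (∑ k, X i k * v k) = μ * v i := by
    intro i
    have := congrFun hμ i
    simpa [Matrix.mulVec, dotProduct] using this
  have hXs : ∀ i j, X i j = X j i := by
    intro i j
    have := congrFun (congrFun (hMsym X hX) j) i
    simpa [Matrix.transpose_apply] using this
  have hPT : Pᵀ = P := by
    ext i j
    simp [hP, Matrix.transpose_apply, vecMulVec_apply, mul_comm]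
  have hQT : Qᵀ = Q := by
    simp [hQ, Matrix.transpose_sub, Matrix.transpose_smul, hPT]
  have hPP : P * P = (v ⬝ᵥ v) • P := by
    ext i j
    simp only [Matrix.mul_apply, hP, vecMulVec_apply, Matrix.smul_apply, smul_eq_mul,
      dotProduct]
    calc ∑ k, v i * v k * (v k * v j) = ∑ k, v k * v k * (v i * v j) := by
          apply Finset.sum_congr rfl; intros; ring
      _ = (∑ k, v k * v k) * (v i * v j) := by rw [Finset.sum_mul]
  have hcc : c * (c * (v ⬝ᵥ v)) = 2 * c := by
    field_simp [hc]
    try ring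
    rw [hc]
    field_simp
  have hQQ : Q * Q = 1 := by
    rw [hQ, sub_mul, mul_sub, mul_sub]
    simp only [mul_one, one_mul, smul_mul_assoc, mul_smul_comm, smul_smul, hPP]
    rw [hcc]
    module
  have hQorth : IsOrthogonal Q := ⟨by rw [hQT, hQQ], by rw [hQT, hQQ]⟩
  have hXP : X * P = μ • P := by
    ext i j
    simp only [Matrix.mul_apply, hP, vecMulVec_apply, Matrix.smul_apply, smul_eq_mul]
    calc ∑ k, X i k * (v k * v j) = (∑ k, X i k * v k) * v j := by
          rw [Finset.sum_mul]; apply Finset.sum_congr rfl; intros; ring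
      _ = μ * (v i * v j) := by rw [hμ' i]; ring
  have hPX : P * X = μ • P := by
    ext i j
    simp only [Matrix.mul_apply, hP, vecMulVec_apply, Matrix.smul_apply, smul_eq_mul]
    calc ∑ k, v i * v k * X k j = v i * ∑ k, X j k * v k := by
          rw [Finset.mul_sum]; apply Finset.sum_congr rfl
          intro k _; rw [hXs k j]; ring
      _ = μ * (v i * v j) := by rw [hμ' j]; ring
  have hQX : Q * X = X * Q := by
    rw [hQ, Matrix.sub_mul, Matrix.mul_sub, one_mul, mul_one, Matrix.smul_mul,
      Matrix.mul_smul, hPX, hXP]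
  have hQXQ : Qᵀ * X * Q = X := by
    rw [hQT, hQX, mul_assoc, hQQ, mul_one]
  have hcomm : Q * Φ X = Φ X * Q := by
    have h := hΦiso X hX Q hQorth
    rw [hQXQ, hQT] at h
    calc Q * Φ X = Q * (Q * Φ X * Q) := by rw [← h]
      _ = (Q * Q) * Φ X * Q := by rw [← mul_assoc, ← mul_assoc]
      _ = Φ X * Q := by rw [hQQ, one_mul]
  have hPv : P.mulVec v = (v ⬝ᵥ v) • v := by
    funext i
    simp only [Matrix.mulVec, dotProduct, hP, vecMulVec_apply, Pi.smul_apply, smul_eq_mul]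
    rw [Finset.sum_mul]
    apply Finset.sum_congr rfl; intros; ring
  have hQv : Q.mulVec v = -v := by
    rw [hQ, Matrix.sub_mulVec, Matrix.one_mulVec, Matrix.smul_mulVec, hPv,
      smul_smul, hc]
    funext i
    field_simp
    rw [two_smul]
    simp
  set w : Fin n → ℝ := (Φ X).mulVec v with hw
  have hQw : Q.mulVec w = -w := by
    rw [hw, Matrix.mulVec_mulVec, hcomm, ← Matrix.mulVec_mulVec, hQv,
      Matrix.mulVec_neg]
  have hPw : P.mulVec w = (v ⬝ᵥ w) • v := by
    funext i
    simp only [Matrix.mulVec, dotProduct, hP, vecMulVec_apply, Pi.smul_apply, smul_eq_mul]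
    rw [Finset.sum_mul]
    apply Finset.sum_congr rfl; intros; ring
  have hQw' : w - (c * (v ⬝ᵥ w)) • v = -w := by
    rw [← smul_smul, ← hPw]
    rw [hQ, Matrix.sub_mulVec, Matrix.one_mulVec, Matrix.smul_mulVec] at hQw
    exact hQw
  refine ⟨hv0, c * (v ⬝ᵥ w) / 2, ?_⟩
  rw [← hw]
  funext i
  have h1 := congrFun hQw' i
  simp only [Pi.sub_apply, Pi.smul_apply, Pi.neg_apply, smul_eq_mul] at h1
  simp only [Pi.smul_apply, smul_eq_mul]
  linarith
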